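/- Assume that E ⊥ Tⁿ E and E ⊥ T'ⁿ E for every integer n ≥ 1 (i.e. ⟨e, Tⁿ e'⟩ = 0 = ⟨e, T'ⁿ e'⟩ for all e, e' ∈ E and n ≥ 1). Let (e_m)_{m∈ℕ} be a sequence in E with Σ_{m≥0} ‖Tᵐ e_m‖ < ∞ and put x := Σ_{m≥0} Tᵐ e_m. Then Σ_{n≥0} ‖Tⁿ P_E T'*ⁿ x‖ < ∞ and Σ_{n≥0} Tⁿ P_E T'*ⁿ x = x, while T'*ⁿ P_E Tⁿ x = 0 for every n ≥ 1. -/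

import Mathlib

open ContinuousLinearMap

/-- Orthogonal projection onto the closed subspace `E`, as an operator `H →L[ℂ] H`. -/
noncomputable def PE {H : Type*} [NormedAddCommGroup H] [InnerProductSpace ℂ H]
    (E : Submodule ℂ H) [CompleteSpace E] : H →L[ℂ] H :=
  E.subtypeL.comp (Submodule.orthogonalProjectionOnto E)

lemma PE_of_mem {H : Type*} [NormedAddCommGroup H] [InnerProductSpace ℂ H]
    (E : Submodule ℂ H) [CompleteSpace E] {y : H} (hy : y ∈ E) : PE E y = y := by
  exact (Submodule.starProjection_eq_self_iff (K := E)).2 hy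

lemma PE_of_perp {H : Type*} [NormedAddCommGroup H] [InnerProductSpace ℂ H]
    (E : Submodule ℂ H) [CompleteSpace E] {y : H} (hy : y ∈ Eᗮ) : PE E y = 0 := by
  simp [PE, Submodule.orthogonalProjectionOnto_apply_of_mem_orthogonal hy]

theorem stmt_17 {H : Type*} [NormedAddCommGroup H] [InnerProductSpace ℂ H] [CompleteSpace H]
    (T T' W : H →L[ℂ] H)
    (hleft : ∃ S : H →L[ℂ] H, S.comp T = ContinuousLinearMap.id ℂ H)
    (hW1 : W.comp ((ContinuousLinearMap.adjoint T).comp T) = ContinuousLinearMap.id ℂ H)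
    (hW2 : ((ContinuousLinearMap.adjoint T).comp T).comp W = ContinuousLinearMap.id ℂ H)
    (hT' : T' = T.comp W)
    (E : Submodule ℂ H) [CompleteSpace E]
    (horth : ∀ n : ℕ, 1 ≤ n → ∀ e ∈ E, ∀ e' ∈ E,
      (inner ℂ e ((T ^ n) e') : ℂ) = 0 ∧ (inner ℂ e ((T' ^ n) e') : ℂ) = 0)
    (e : ℕ → H) (he : ∀ m : ℕ, e m ∈ E)
    (hsum : Summable (fun m : ℕ => ‖(T ^ m) (e m)‖))
    (x : H) (hx : HasSum (fun m : ℕ => (T ^ m) (e m)) x) :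
    Summable (fun n : ℕ =>
      ‖(T ^ n) (PE E (((ContinuousLinearMap.adjoint T') ^ n) x))‖) ∧
    (∑' n : ℕ, (T ^ n) (PE E (((ContinuousLinearMap.adjoint T') ^ n) x))) = x ∧
    (∀ n : ℕ, 1 ≤ n →
      ((ContinuousLinearMap.adjoint T') ^ n) (PE E ((T ^ n) x)) = 0) := by
  set A := ContinuousLinearMap.adjoint T' with hA
  -- W is self-adjoint
  have hWsa : ContinuousLinearMap.adjoint W = W := by
    have hB : ContinuousLinearMap.adjoint ((ContinuousLinearMap.adjoint T).comp T)
        = (ContinuousLinearMap.adjoint T).comp T := by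
      rw [adjoint_comp, adjoint_adjoint]
    have h1 : ((ContinuousLinearMap.adjoint T).comp T).comp (ContinuousLinearMap.adjoint W)
        = ContinuousLinearMap.id ℂ H := by
      have := congrArg ContinuousLinearMap.adjoint hW1
      rwa [adjoint_comp, hB, adjoint_id] at this
    calc ContinuousLinearMap.adjoint W
        = (W.comp ((ContinuousLinearMap.adjoint T).comp T)).comp
            (ContinuousLinearMap.adjoint W) := by rw [hW1]; ext y; rfl
      _ = W.comp (((ContinuousLinearMap.adjoint T).comp T).comp
            (ContinuousLinearMap.adjoint W)) := by rw [ContinuousLinearMap.comp_assoc]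
      _ = W := by rw [h1]; ext y; rfl
  -- A ∘ T = id pointwise
  have hAT : ∀ y : H, A (T y) = y := by
    intro y
    have : A = W.comp (ContinuousLinearMap.adjoint T) := by
      rw [hA, hT', adjoint_comp, hWsa]
    rw [this]
    have := DFunLike.congr_fun hW1 y
    simpa using this
  have key1 : ∀ (n : ℕ) (y : H), (A ^ n) ((T ^ n) y) = y := by
    intro n
    induction n with
    | zero => intro y; simp
    | succ n ih =>
      intro y
      rw [pow_succ A n, pow_succ' T n]
      simp only [ContinuousLinearMap.mul_apply]
      rw [hAT, ih]
  have key_ge : ∀ (n m : ℕ) (y : H), (A ^ n) ((T ^ (n + m)) y) = (T ^ m) y := by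
    intro n m y
    rw [pow_add, ContinuousLinearMap.mul_apply, key1]
  have key_le : ∀ (n m : ℕ) (y : H), (A ^ (n + m)) ((T ^ m) y) = (A ^ n) y := by
    intro n m y
    rw [pow_add, ContinuousLinearMap.mul_apply, key1]
  -- orthogonality facts
  have hperpT : ∀ (k : ℕ), 1 ≤ k → ∀ y ∈ E, (T ^ k) y ∈ Eᗮ := by
    intro k hk y hy
    rw [Submodule.mem_orthogonal]
    intro u hu
    exact (horth k hk u hu y hy).1
  have hperpA : ∀ (k : ℕ), 1 ≤ k → ∀ y ∈ E, (A ^ k) y ∈ Eᗮ := by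
    intro k hk y hy
    rw [Submodule.mem_orthogonal]
    intro u hu
    have hpow : A ^ k = ContinuousLinearMap.adjoint (T' ^ k) := by
      rw [hA, ← star_eq_adjoint, ← star_eq_adjoint, ← star_pow]
    rw [hpow, ContinuousLinearMap.adjoint_inner_right]
    have h0 : (inner ℂ y ((T' ^ k) u) : ℂ) = 0 := (horth k hk y hy u hu).2
    rw [← inner_conj_symm, h0, map_zero]
  -- the key identity PE E ((A^n) x) = e n
  have hPn : ∀ n : ℕ, PE E ((A ^ n) x) = e n := by
    intro n
    have h2 : HasSum (fun m : ℕ => PE E ((A ^ n) ((T ^ m) (e m)))) (PE E ((A ^ n) x)) :=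
      (PE E).hasSum ((A ^ n).hasSum hx)
    have h3 : (fun m : ℕ => PE E ((A ^ n) ((T ^ m) (e m))))
        = fun m : ℕ => if m = n then e n else 0 := by
      funext m
      rcases lt_trichotomy m n with hlt | heq | hgt
      · have hnm : (n - m) + m = n := Nat.sub_add_cancel hlt.le
        rw [if_neg hlt.ne]
        rw [← hnm, key_le]
        exact PE_of_perp E (hperpA (n - m) (by omega) (e m) (he m))
      · subst heq
        rw [if_pos rfl, key1]
        exact PE_of_mem E (he m)
      · have hnm : n + (m - n) = m := by omega
        have hkey := key_ge n (m - n) (e m)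
        rw [hnm] at hkey
        rw [if_neg hgt.ne', hkey]
        exact PE_of_perp E (hperpT (m - n) (by omega) (e m) (he m))
    rw [h3] at h2
    exact h2.unique (hasSum_ite_eq n (e n))
  refine ⟨?_, ?_, ?_⟩
  · simpa only [hPn] using hsum
  · simp only [hPn]
    exact hx.tsum_eq
  · intro n hn
    have h4 : HasSum (fun m : ℕ => PE E ((T ^ n) ((T ^ m) (e m)))) (PE E ((T ^ n) x)) :=
      (PE E).hasSum ((T ^ n).hasSum hx)
    have h5 : (fun m : ℕ => PE E ((T ^ n) ((T ^ m) (e m)))) = fun _ : ℕ => (0 : H) := by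
      funext m
      have : (T ^ n) ((T ^ m) (e m)) = (T ^ (n + m)) (e m) := by
        rw [pow_add, ContinuousLinearMap.mul_apply]
      rw [this]
      exact PE_of_perp E (hperpT (n + m) (by omega) (e m) (he m))
    rw [h5] at h4
    have h6 : PE E ((T ^ n) x) = 0 := h4.unique hasSum_zero
    rw [h6, map_zero]
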